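/- Let T = Σ_{i=1}^I d_i V_i with d_i ∈ ℝ and V_i independent {-1,1}-valued r.v.'s from Rosenbaum's model with parameter γ = log Γ and arbitrary w ∈ [-1,1]^I, and let T^+ denote the corresponding sum when w = (sgn(d_1),...,sgn(d_I)). Then for every t ∈ ℝ, P(T ≥ t) ≤ P(T^+ ≥ t). -/

import Mathlib

open MeasureTheory ProbabilityTheory Real Finset Function

namespace Stmt6Aux

def c (b : Bool) : ℝ := if b then 1 else -1

noncomputable def W {I : ℕ} (p : Fin I → ℝ) (ε : Fin I → Bool) : ℝ :=
  ∏ i, (if ε i then p i else 1 - p i)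

lemma step {I : ℕ} (g : (Fin I → Bool) → ℝ) (p : Fin I → ℝ) (j : Fin I) (b : ℝ)
    (hp : ∀ i, 0 ≤ p i ∧ p i ≤ 1)
    (hkey : ∀ ε, 0 ≤ (b - p j) *
      (g (Function.update ε j true) - g (Function.update ε j false))) :
    ∑ ε : Fin I → Bool, g ε * W p ε ≤ ∑ ε, g ε * W (Function.update p j b) ε := by
  set H : (Fin I → Bool) → ℝ :=
    fun ε => ∏ i ∈ Finset.univ.erase j, (if ε i then p i else 1 - p i) with hH
  have hHnn : ∀ ε, 0 ≤ H ε := by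
    intro ε
    refine Finset.prod_nonneg fun i _ => ?_
    rcases hp i with ⟨h0, h1⟩
    cases εi : ε i <;> simp <;> linarith
  have hHupd : ∀ ε b', H (Function.update ε j b') = H ε := by
    intro ε b'
    refine Finset.prod_congr rfl fun i hi => ?_
    rw [Function.update_of_ne (Finset.mem_erase.1 hi).1]
  have hW : ∀ ε, W p ε = (if ε j then p j else 1 - p j) * H ε := by
    intro ε
    rw [W, ← Finset.mul_prod_erase _ _ (Finset.mem_univ j)]
  have hW' : ∀ ε, W (Function.update p j b) ε = (if ε j then b else 1 - b) * H ε := by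
    intro ε
    rw [W, ← Finset.mul_prod_erase _ _ (Finset.mem_univ j)]
    simp only [Function.update_self]
    congr 1
    refine Finset.prod_congr rfl fun i hi => ?_
    rw [Function.update_of_ne (Finset.mem_erase.1 hi).1]
  rw [← sub_nonneg, ← Finset.sum_sub_distrib]
  set T : (Fin I → Bool) → ℝ :=
    fun ε => (b - p j) * (if ε j then (1:ℝ) else -1) * g ε * H ε with hT
  have hsum : ∑ ε : Fin I → Bool,
      (g ε * W (Function.update p j b) ε - g ε * W p ε) = ∑ ε, T ε := by
    refine Finset.sum_congr rfl fun ε _ => ?_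
    rw [hW, hW']
    cases εj : ε j <;> simp [T, εj] <;> ring
  rw [hsum]
  -- pairing via the flip involution
  have hinv : Function.Involutive
      (fun ε : Fin I → Bool => Function.update ε j (!(ε j))) := by
    intro ε; funext i
    by_cases h : i = j
    · subst h; simp
    · simp [Function.update_of_ne h]
  have hflip : ∑ ε : Fin I → Bool, T (Function.update ε j (!(ε j))) = ∑ ε, T ε :=
    Equiv.sum_comp hinv.toPerm T
  have hpair : ∀ ε, T ε + T (Function.update ε j (!(ε j)))
      = (b - p j) * (g (Function.update ε j true) - g (Function.update ε j false)) * H ε := by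
    intro ε
    cases εj : ε j
    · have h1 : Function.update ε j false = ε := by
        rw [← εj]; exact Function.update_eq_self j ε
      simp only [T, εj, hHupd, h1, Function.update_self, Bool.not_false]
      norm_num
      ring
    · have h1 : Function.update ε j true = ε := by
        rw [← εj]; exact Function.update_eq_self j ε
      simp only [T, εj, hHupd, h1, Function.update_self, Bool.not_true]
      norm_num
      ring
  have h2 : 0 ≤ ∑ ε : Fin I → Bool, (T ε + T (Function.update ε j (!(ε j)))) := by
    refine Finset.sum_nonneg fun ε _ => ?_
    rw [hpair]
    exact mul_nonneg (hkey ε) (hHnn ε)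
  rw [Finset.sum_add_distrib, hflip] at h2
  linarith

lemma master {I : ℕ} (g : (Fin I → Bool) → ℝ) (q r : Fin I → ℝ)
    (hq : ∀ i, 0 ≤ q i ∧ q i ≤ 1) (hr : ∀ i, 0 ≤ r i ∧ r i ≤ 1)
    (hkey : ∀ j ε, 0 ≤ (r j - q j) *
      (g (Function.update ε j true) - g (Function.update ε j false))) :
    ∑ ε : Fin I → Bool, g ε * W q ε ≤ ∑ ε, g ε * W r ε := by
  classical
  have key : ∀ s : Finset (Fin I), ∑ ε : Fin I → Bool, g ε * W q ε
      ≤ ∑ ε, g ε * W (fun i => if i ∈ s then r i else q i) ε := by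
    intro s
    induction s using Finset.induction_on with
    | empty => simp
    | @insert j s hj ih =>
      refine le_trans ih ?_
      have heq : (fun i => if i ∈ insert j s then r i else q i)
          = Function.update (fun i => if i ∈ s then r i else q i) j (r j) := by
        funext i
        by_cases h : i = j
        · subst h; simp [hj]
        · simp [Function.update_of_ne h, Finset.mem_insert, h]
      rw [heq]
      refine step g _ j (r j) (fun i => ?_) (fun ε => ?_)
      · by_cases h : i ∈ s <;> simp [h, hq i, hr i]
      · simpa [hj] using hkey j ε
  have := key Finset.univ
  simpa using this


noncomputable def sig (u : ℝ) : ℝ := Real.exp u / (Real.exp u + Real.exp (-u))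

lemma sig_nonneg (u : ℝ) : 0 ≤ sig u :=
  div_nonneg (Real.exp_pos u).le (by positivity)

lemma sig_le_one (u : ℝ) : sig u ≤ 1 := by
  rw [sig, div_le_one (by positivity)]
  linarith [Real.exp_pos (-u)]

lemma sig_mono {a b : ℝ} (h : a ≤ b) : sig a ≤ sig b := by
  rw [sig, sig, div_le_div_iff₀ (by positivity) (by positivity)]
  have h2 : Real.exp (a + -b) ≤ Real.exp (b + -a) := Real.exp_le_exp.2 (by linarith)
  rw [Real.exp_add, Real.exp_add] at h2
  nlinarith [Real.exp_pos a, Real.exp_pos b, Real.exp_pos (-a), Real.exp_pos (-b),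
    (Real.exp_pos a).le, (Real.exp_pos b).le]

lemma sig_eq (u : ℝ) :
    Real.exp u / (Real.exp u + Real.exp (-(2 * u)/2)) = sig u := by
  rw [sig]
  ring_nf

lemma decomp {Ω : Type*} [MeasurableSpace Ω] (μ : Measure Ω) [IsProbabilityMeasure μ]
    {I : ℕ} (d : Fin I → ℝ) (t : ℝ) (V : Fin I → Ω → ℝ)
    (hmeas : ∀ i, Measurable (V i)) (hval : ∀ i ω, V i ω = 1 ∨ V i ω = -1)
    (hind : iIndepFun V μ) :
    μ {ω | t ≤ ∑ i, d i * V i ω}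
      = ∑ ε : Fin I → Bool,
          (if t ≤ ∑ i, d i * c (ε i) then ∏ i, μ (V i ⁻¹' {c (ε i)}) else 0) := by
  classical
  set block : (Fin I → Bool) → Set Ω := fun ε => ⋂ i, V i ⁻¹' {c (ε i)} with hblock
  have hmb : ∀ ε, MeasurableSet (block ε) := fun ε =>
    MeasurableSet.iInter fun i => (hmeas i) (measurableSet_singleton _)
  have hprod : ∀ ε, μ (block ε) = ∏ i, μ (V i ⁻¹' {c (ε i)}) := fun ε =>
    hind.meas_iInter fun i => ⟨{c (ε i)}, measurableSet_singleton _, rfl⟩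
  have hset : {ω | t ≤ ∑ i, d i * V i ω}
      = ⋃ ε ∈ Finset.univ.filter (fun ε : Fin I → Bool => t ≤ ∑ i, d i * c (ε i)),
          block ε := by
    ext ω
    simp only [Set.mem_setOf_eq, Set.mem_iUnion, Finset.mem_filter, Finset.mem_univ,
      true_and, exists_prop]
    constructor
    · intro hω
      refine ⟨fun i => if V i ω = 1 then true else false, ?_, ?_⟩
      · have : ∀ i, d i * c (if V i ω = 1 then true else false) = d i * V i ω := by
          intro i
          by_cases h : V i ω = 1
          · simp [c, h]
          · rcases hval i ω with h1 | h1
            · exact absurd h1 h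
            · norm_num [c, h, h1]
        rw [Finset.sum_congr rfl fun i _ => this i]
        exact hω
      · simp only [block, Set.mem_iInter, Set.mem_preimage, Set.mem_singleton_iff]
        intro i
        by_cases h : V i ω = 1
        · simp [c, h]
        · rcases hval i ω with h1 | h1
          · exact absurd h1 h
          · norm_num [c, h, h1]
    · rintro ⟨ε, hε, hωε⟩
      simp only [block, Set.mem_iInter, Set.mem_preimage, Set.mem_singleton_iff] at hωε
      have : ∀ i, d i * V i ω = d i * c (ε i) := fun i => by rw [hωε i]
      rw [Finset.sum_congr rfl fun i _ => this i]
      exact hε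
  rw [hset, measure_biUnion_finset ?_ (fun ε _ => hmb ε)]
  · rw [Finset.sum_filter]
    exact Finset.sum_congr rfl fun ε _ => by
      split <;> simp [hprod ε]
  · intro ε hε ε' hε' hne
    obtain ⟨i, hi⟩ := Function.ne_iff.1 hne
    have hc : c (ε i) ≠ c (ε' i) := by
      cases h1 : ε i <;> cases h2 : ε' i <;>
        simp_all [c] <;> norm_num
    refine Set.disjoint_left.2 fun ω hω hω' => ?_
    simp only [block, Set.mem_iInter, Set.mem_preimage, Set.mem_singleton_iff] at hω hω'
    exact hc ((hω i).symm ▸ (hω' i) ▸ rfl)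


lemma abs_eq {Ω₀ : Type*} [MeasurableSpace Ω₀] (μ₀ : Measure Ω₀) [IsProbabilityMeasure μ₀]
    {I : ℕ} (d : Fin I → ℝ) (t : ℝ) (V₀ : Fin I → Ω₀ → ℝ)
    (hm : ∀ i, Measurable (V₀ i)) (hv : ∀ i ω, V₀ i ω = 1 ∨ V₀ i ω = -1)
    (hi : iIndepFun V₀ μ₀) (p : Fin I → ℝ)
    (hp01 : ∀ i, 0 ≤ p i ∧ p i ≤ 1)
    (hpc : ∀ (i : Fin I) (b : Bool),
      μ₀ (V₀ i ⁻¹' {c b}) = ENNReal.ofReal (if b then p i else 1 - p i)) :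
    μ₀ {ω | t ≤ ∑ i, d i * V₀ i ω}
      = ENNReal.ofReal (∑ ε : Fin I → Bool,
          (if t ≤ ∑ i, d i * c (ε i) then (1:ℝ) else 0) * W p ε) := by
  have hwt : ∀ (ε : Fin I → Bool) (i : Fin I), 0 ≤ (if ε i then p i else 1 - p i) := by
    intro ε i
    rcases hp01 i with ⟨h0, h1⟩
    cases h : ε i <;> simp <;> linarith
  rw [decomp μ₀ d t V₀ hm hv hi,
    ENNReal.ofReal_sum_of_nonneg (fun ε _ => by
      refine mul_nonneg ?_ (Finset.prod_nonneg fun i _ => hwt ε i)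
      split <;> norm_num)]
  refine Finset.sum_congr rfl fun ε _ => ?_
  by_cases hc : t ≤ ∑ i, d i * c (ε i)
  · rw [if_pos hc]
    simp only [hc, if_true, one_mul, W]
    rw [ENNReal.ofReal_prod_of_nonneg (fun i _ => hwt ε i)]
    exact Finset.prod_congr rfl fun i _ => hpc i (ε i)
  · rw [if_neg hc]
    simp [hc]

end Stmt6Aux

open MeasureTheory ProbabilityTheory Real

/-- Let `T = Σ d_i V_i` under Rosenbaum's model with arbitrary `w ∈ [-1,1]^I`, and
`T^+` the corresponding sum when `w = (sgn d_1, ..., sgn d_I)`.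
Then for every `t`, `P(T ≥ t) ≤ P(T^+ ≥ t)`. -/
theorem stmt6 {Ω Ω' : Type*} [MeasurableSpace Ω] [MeasurableSpace Ω']
    (μ : Measure Ω) (ν : Measure Ω') [IsProbabilityMeasure μ] [IsProbabilityMeasure ν]
    (I : ℕ) (d : Fin I → ℝ) (γ : ℝ) (hγ : 0 ≤ γ)
    (w : Fin I → ℝ) (hw : ∀ i, w i ∈ Set.Icc (-1 : ℝ) 1)
    (V : Fin I → Ω → ℝ) (Vplus : Fin I → Ω' → ℝ)
    (hmeas : ∀ i, Measurable (V i)) (hmeas' : ∀ i, Measurable (Vplus i))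
    (hval : ∀ i ω, V i ω = 1 ∨ V i ω = -1) (hval' : ∀ i ω, Vplus i ω = 1 ∨ Vplus i ω = -1)
    (hind : iIndepFun V μ)
    (hind' : iIndepFun Vplus ν)
    (hp : ∀ i, μ {ω | V i ω = 1}
        = ENNReal.ofReal (Real.exp (γ * w i / 2) /
            (Real.exp (γ * w i / 2) + Real.exp (-(γ * w i) / 2))))
    (hp' : ∀ i, ν {ω | Vplus i ω = 1}
        = ENNReal.ofReal (Real.exp (γ * Real.sign (d i) / 2) /
            (Real.exp (γ * Real.sign (d i) / 2) + Real.exp (-(γ * Real.sign (d i)) / 2)))) :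
    ∀ t : ℝ, μ {ω | t ≤ ∑ i, d i * V i ω} ≤ ν {ω | t ≤ ∑ i, d i * Vplus i ω} := by
  classical
  intro t
  open Stmt6Aux in
  set qq : Fin I → ℝ := fun i => sig (γ * w i / 2) with hqq
  set rr : Fin I → ℝ := fun i => sig (γ * Real.sign (d i) / 2) with hrr
  -- marginal laws as ofReal
  have hμc : ∀ (i : Fin I) (b : Bool),
      μ (V i ⁻¹' {Stmt6Aux.c b}) = ENNReal.ofReal (if b then qq i else 1 - qq i) := by
    intro i b
    have h1 : μ (V i ⁻¹' {(1:ℝ)}) = ENNReal.ofReal (qq i) := by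
      have he : V i ⁻¹' {(1:ℝ)} = {ω | V i ω = 1} := rfl
      have harg : Real.exp (γ * w i / 2) /
          (Real.exp (γ * w i / 2) + Real.exp (-(γ * w i) / 2))
          = Stmt6Aux.sig (γ * w i / 2) := by
        rw [Stmt6Aux.sig, neg_div]
      rw [he, hp i, harg]
    cases b
    · have hcompl : V i ⁻¹' {Stmt6Aux.c false} = (V i ⁻¹' {(1:ℝ)})ᶜ := by
        ext ω
        simp only [Set.mem_preimage, Set.mem_singleton_iff, Set.mem_compl_iff, Stmt6Aux.c]
        rcases hval i ω with h | h <;> norm_num [h]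
      rw [hcompl, measure_compl ((hmeas i) (measurableSet_singleton _)) (measure_ne_top _ _),
        measure_univ, h1, ← ENNReal.ofReal_one,
        ← ENNReal.ofReal_sub _ (Stmt6Aux.sig_nonneg _)]
      simp [qq]
    · simpa [Stmt6Aux.c] using h1
  have hνc : ∀ (i : Fin I) (b : Bool),
      ν (Vplus i ⁻¹' {Stmt6Aux.c b}) = ENNReal.ofReal (if b then rr i else 1 - rr i) := by
    intro i b
    have h1 : ν (Vplus i ⁻¹' {(1:ℝ)}) = ENNReal.ofReal (rr i) := by
      have he : Vplus i ⁻¹' {(1:ℝ)} = {ω | Vplus i ω = 1} := rfl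
      have harg : Real.exp (γ * Real.sign (d i) / 2) /
          (Real.exp (γ * Real.sign (d i) / 2) + Real.exp (-(γ * Real.sign (d i)) / 2))
          = Stmt6Aux.sig (γ * Real.sign (d i) / 2) := by
        rw [Stmt6Aux.sig, neg_div]
      rw [he, hp' i, harg]
    cases b
    · have hcompl : Vplus i ⁻¹' {Stmt6Aux.c false} = (Vplus i ⁻¹' {(1:ℝ)})ᶜ := by
        ext ω
        simp only [Set.mem_preimage, Set.mem_singleton_iff, Set.mem_compl_iff, Stmt6Aux.c]
        rcases hval' i ω with h | h <;> norm_num [h]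
      rw [hcompl, measure_compl ((hmeas' i) (measurableSet_singleton _)) (measure_ne_top _ _),
        measure_univ, h1, ← ENNReal.ofReal_one,
        ← ENNReal.ofReal_sub _ (Stmt6Aux.sig_nonneg _)]
      simp [rr]
    · simpa [Stmt6Aux.c] using h1
  have hqq01 : ∀ i, 0 ≤ qq i ∧ qq i ≤ 1 :=
    fun i => ⟨Stmt6Aux.sig_nonneg _, Stmt6Aux.sig_le_one _⟩
  have hrr01 : ∀ i, 0 ≤ rr i ∧ rr i ≤ 1 :=
    fun i => ⟨Stmt6Aux.sig_nonneg _, Stmt6Aux.sig_le_one _⟩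
  have hL := Stmt6Aux.abs_eq μ d t V hmeas hval hind qq hqq01 hμc
  have hR := Stmt6Aux.abs_eq ν d t Vplus hmeas' hval' hind' rr hrr01 hνc
  rw [hL, hR]
  refine ENNReal.ofReal_le_ofReal ?_
  refine Stmt6Aux.master
    (fun ε => if t ≤ ∑ i, d i * Stmt6Aux.c (ε i) then (1:ℝ) else 0)
    qq rr hqq01 hrr01 fun j ε => ?_
  have hsum_upd : ∀ (b : Bool), ∑ i, d i * Stmt6Aux.c (Function.update ε j b i)
      = d j * Stmt6Aux.c b + ∑ i ∈ Finset.univ.erase j, d i * Stmt6Aux.c (ε i) := by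
    intro b
    rw [← Finset.add_sum_erase _ (fun i => d i * Stmt6Aux.c (Function.update ε j b i))
      (Finset.mem_univ j), Function.update_self]
    congr 1
    exact Finset.sum_congr rfl fun i hi =>
      by rw [Function.update_of_ne (Finset.mem_erase.1 hi).1]
  set S := ∑ i ∈ Finset.univ.erase j, d i * Stmt6Aux.c (ε i) with hS
  have hgt : (if t ≤ ∑ i, d i * Stmt6Aux.c (Function.update ε j true i) then (1:ℝ) else 0)
      = if t ≤ d j * 1 + S then 1 else 0 := by
    rw [hsum_upd true]; norm_num [Stmt6Aux.c]
  have hgf : (if t ≤ ∑ i, d i * Stmt6Aux.c (Function.update ε j false i) then (1:ℝ) else 0)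
      = if t ≤ d j * (-1) + S then 1 else 0 := by
    rw [hsum_upd false]; norm_num [Stmt6Aux.c]
  rcases lt_trichotomy (d j) 0 with hd | hd | hd
  · -- d j < 0 : rr j ≤ qq j and g decreasing in coordinate j
    have hsgn : Real.sign (d j) = -1 := Real.sign_of_neg hd
    have h1 : rr j ≤ qq j := by
      simp only [hrr, hqq, hsgn]
      refine Stmt6Aux.sig_mono ?_
      have := mul_le_mul_of_nonneg_left (hw j).1 hγ
      linarith
    have h2 : (if t ≤ ∑ i, d i * Stmt6Aux.c (Function.update ε j true i) then (1:ℝ) else 0)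
        ≤ (if t ≤ ∑ i, d i * Stmt6Aux.c (Function.update ε j false i) then (1:ℝ) else 0) := by
      rw [hgt, hgf]
      by_cases ha : t ≤ d j * 1 + S
      · rw [if_pos ha, if_pos (show t ≤ d j * (-1) + S by linarith)]
      · rw [if_neg ha]; split <;> norm_num
    nlinarith
  · -- d j = 0
    have heq : (if t ≤ ∑ i, d i * Stmt6Aux.c (Function.update ε j true i) then (1:ℝ) else 0)
        = (if t ≤ ∑ i, d i * Stmt6Aux.c (Function.update ε j false i) then (1:ℝ) else 0) := by
      rw [hgt, hgf, hd]; norm_num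
    rw [heq]; simp
  · -- d j > 0
    have hsgn : Real.sign (d j) = 1 := Real.sign_of_pos hd
    have h1 : qq j ≤ rr j := by
      simp only [hrr, hqq, hsgn]
      refine Stmt6Aux.sig_mono ?_
      have := mul_le_mul_of_nonneg_left (hw j).2 hγ
      linarith
    have h2 : (if t ≤ ∑ i, d i * Stmt6Aux.c (Function.update ε j false i) then (1:ℝ) else 0)
        ≤ (if t ≤ ∑ i, d i * Stmt6Aux.c (Function.update ε j true i) then (1:ℝ) else 0) := by
      rw [hgt, hgf]
      by_cases ha : t ≤ d j * (-1) + S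
      · rw [if_pos ha, if_pos (show t ≤ d j * 1 + S by linarith)]
      · rw [if_neg ha]; split <;> norm_num
    nlinarith
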